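/- If H is an h×h Hadamard matrix (entries ±1, H·Hᵀ = h·I) and 0 < n < h, then there exists an n×n submatrix M of H (obtained by selecting n rows and n columns) with |det(M)| ≥ 2^(d-1)·h^(h/2 - d), where d = h - n. -/

import Mathlib

open Matrix in
lemma aux_pm_det_lb {d : ℕ} (hd : 0 < d) (B : Matrix (Fin d) (Fin d) ℝ)
    (hpm : ∀ i j, B i j = 1 ∨ B i j = -1) (hdet : B.det ≠ 0) :
    (2:ℝ) ^ (d - 1) ≤ |B.det| := by
  classical
  set z : Fin d := ⟨0, hd⟩ with hz
  set Z : Matrix (Fin d) (Fin d) ℤ := fun i j => if B i j = 1 then 1 else -1 with hZ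
  have hZpm : ∀ i j, Z i j = 1 ∨ Z i j = -1 := by
    intro i j
    by_cases hb : B i j = 1
    · left; simp [hZ, hb]
    · right; simp [hZ, hb]
  have hZB : Z.map (Int.cast : ℤ → ℝ) = B := by
    ext i j
    rcases hpm i j with h1 | h1
    · show ((Z i j : ℤ) : ℝ) = B i j
      simp [hZ, Matrix.map_apply, h1]
    · have : ¬ (B i j = 1) := by rw [h1]; norm_num
      show ((Z i j : ℤ) : ℝ) = B i j
      simp [hZ, Matrix.map_apply, this, h1]
      norm_num
  have hdetZ : ((Z.det : ℤ) : ℝ) = B.det := by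
    rw [← hZB]
    simpa using RingHom.map_det (Int.castRingHom ℝ) Z
  set W : Matrix (Fin d) (Fin d) ℤ := fun i j => Z i j - (if i = z then 0 else 1) * Z z j with hW
  have hdZ : Z.det = W.det := by
    refine Matrix.det_eq_of_forall_row_eq_smul_add_const (fun i => if i = z then 0 else 1) z
      (by simp) (fun i j => ?_)
    have hWz : W z j = Z z j := by simp [hW]
    rw [hWz]
    simp only [hW]
    ring
  have heven : ∀ i j, i ≠ z → (2:ℤ) ∣ W i j := by
    intro i j hi
    simp only [hW, if_neg hi, one_mul]
    rcases hZpm i j with h1 | h1 <;> rcases hZpm z j with h2 | h2 <;> simp [h1, h2]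
  have hdvd : (2:ℤ) ^ (d - 1) ∣ W.det := by
    rw [Matrix.det_apply]
    refine Finset.dvd_sum (fun σ _ => ?_)
    rw [Units.smul_def, zsmul_eq_mul]
    refine Dvd.dvd.mul_left ?_ _
    have hre : ∏ i, W (σ i) i = ∏ j, W j (σ⁻¹ j) := by
      rw [← Equiv.prod_comp σ (fun j => W j (σ⁻¹ j))]
      simp
    rw [hre]
    have hcard : (Finset.univ.erase z).card = d - 1 := by
      rw [Finset.card_erase_of_mem (Finset.mem_univ z), Finset.card_univ, Fintype.card_fin]
    calc (2:ℤ) ^ (d-1) = ∏ _i ∈ Finset.univ.erase z, 2 := by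
          rw [Finset.prod_const, hcard]
      _ ∣ ∏ j ∈ Finset.univ.erase z, W j (σ⁻¹ j) :=
          Finset.prod_dvd_prod_of_dvd _ _ (fun j hj => heven j _ (Finset.ne_of_mem_erase hj))
      _ ∣ ∏ j, W j (σ⁻¹ j) :=
          Finset.prod_dvd_prod_of_subset _ _ _ (Finset.erase_subset _ _)
  have hZ0 : Z.det ≠ 0 := fun h0 => hdet (by rw [← hdetZ, h0]; simp)
  have hle : (2:ℤ) ^ (d - 1) ≤ |Z.det| :=
    Int.le_of_dvd (abs_pos.mpr hZ0) ((dvd_abs _ _).mpr (hdZ ▸ hdvd))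
  calc (2:ℝ) ^ (d-1) = (((2:ℤ) ^ (d-1) : ℤ) : ℝ) := by push_cast; ring
    _ ≤ ((|Z.det| : ℤ) : ℝ) := by exact_mod_cast hle
    _ = |B.det| := by rw [← hdetZ]; push_cast; ring


lemma aux_extend_equiv {n d h : ℕ} (hnd : n + d = h) (g : Fin d → Fin h)
    (hg : Function.Injective g) :
    ∃ e : (Fin n ⊕ Fin d) ≃ Fin h, ∀ k, e (Sum.inr k) = g k := by
  classical
  have hcard : Fintype.card ↥(Set.range g)ᶜ = n := by
    simp only [Fintype.card_compl_set, Set.card_range_of_injective hg, Fintype.card_fin]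
    omega
  let φ : Fin n ≃ ↥(Set.range g)ᶜ := Fintype.equivOfCardEq (by rw [hcard, Fintype.card_fin])
  let F : Fin n ⊕ Fin d → Fin h := Sum.elim (fun x => (φ x : Fin h)) g
  have hFinj : Function.Injective F := by
    rintro (a | a) (b | b) hab
    · simp only [F, Sum.elim_inl] at hab
      exact congrArg Sum.inl (φ.injective (Subtype.ext hab))
    · simp only [F, Sum.elim_inl, Sum.elim_inr] at hab
      exact absurd (hab ▸ Set.mem_range_self b) (φ a).2
    · simp only [F, Sum.elim_inl, Sum.elim_inr] at hab
      exact absurd (hab ▸ Set.mem_range_self a) (φ b).2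
    · exact congrArg Sum.inr (hg hab)
  have hFbij : Function.Bijective F :=
    (Fintype.bijective_iff_injective_and_card F).mpr ⟨hFinj, by simp [hnd]⟩
  exact ⟨Equiv.ofBijective F hFbij, fun k => rfl⟩

open Matrix in
lemma aux_exists_submatrix {d h : ℕ} (hdh : d ≤ h) (A : Matrix (Fin h) (Fin h) ℝ)
    (hA : IsUnit A) :
    ∃ g g' : Fin d → Fin h, Function.Injective g ∧ Function.Injective g' ∧
      IsUnit (A.submatrix g g') := by
  classical
  set g : Fin d → Fin h := Fin.castLE hdh with hgdef
  have hg : Function.Injective g := Fin.castLE_injective hdh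
  have hrows : LinearIndependent ℝ (fun i : Fin h => A i) :=
    Matrix.linearIndependent_rows_iff_isUnit.mpr hA
  have hli : LinearIndependent ℝ (fun i : Fin d => A (g i)) := hrows.comp g hg
  set c : Fin h → (Fin d → ℝ) := fun j i => A (g i) j with hc
  set T : Matrix (Fin d) (Fin h) ℝ := A.submatrix g id with hT
  have hspan : Submodule.span ℝ (Set.range c) = ⊤ := by
    have h1 : (Tᵀ).rank = d := by
      rw [Matrix.rank_eq_finrank_span_cols, show Tᵀ.col = fun i => T i from rfl]
      have : (Set.range fun i : Fin d => T i) = Set.range fun i : Fin d => A (g i) := rfl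
      rw [show (Set.range fun i => T i) = Set.range fun i : Fin d => A (g i) from rfl]
      rw [finrank_span_eq_card hli, Fintype.card_fin]
    have h2 : Tᵀ.rank = T.rank := Matrix.rank_transpose T
    have h3 : T.rank = Module.finrank ℝ (Submodule.span ℝ (Set.range c)) := by
      rw [Matrix.rank_eq_finrank_span_cols]
      congr 1
    have h4 : Module.finrank ℝ (Submodule.span ℝ (Set.range c)) = d := by
      rw [← h3, ← h2, h1]
    exact Submodule.eq_top_of_finrank_eq (by rw [h4]; simp)
  obtain ⟨b, hbsub, hbspan, hbli⟩ := exists_linearIndependent ℝ (Set.range c)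
  have hbfin : b.Finite := (Set.finite_range c).subset hbsub
  haveI : Fintype b := hbfin.fintype
  have hbcard : Fintype.card b = d := by
    have := finrank_span_set_eq_card hbli
    rw [hbspan, hspan] at this
    simp only [finrank_top] at this
    rw [Set.toFinset_card] at this
    rw [← this]
    simp
  let φ : Fin d ≃ b := (Fintype.equivFinOfCardEq hbcard).symm
  have hpre : ∀ x : b, ∃ j, c j = (x : Fin d → ℝ) := fun x => hbsub x.2
  let ψ : b → Fin h := fun x => Classical.choose (hpre x)
  have hψ : ∀ x, c (ψ x) = (x : Fin d → ℝ) := fun x => Classical.choose_spec (hpre x)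
  refine ⟨g, ψ ∘ φ, hg, ?_, ?_⟩
  · intro k l hkl
    have : c (ψ (φ k)) = c (ψ (φ l)) := by rw [show ψ (φ k) = ψ (φ l) from hkl]
    rw [hψ, hψ] at this
    exact φ.injective (Subtype.ext this)
  · have hcols : (fun k => (A.submatrix g (ψ ∘ φ))ᵀ k) = fun k => ((φ k : b) : Fin d → ℝ) := by
      funext k
      exact hψ (φ k)
    have : LinearIndependent ℝ (fun k : Fin d => ((φ k : b) : Fin d → ℝ)) :=
      hbli.comp φ φ.injective
    exact Matrix.linearIndependent_cols_iff_isUnit.mp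
      (show LinearIndependent ℝ (fun k => (A.submatrix g (ψ ∘ φ))ᵀ k) from hcols ▸ this)


open Matrix in
theorem stmt_8 (h n : ℕ) (hn : 0 < n) (hnh : n < h)
    (H : Matrix (Fin h) (Fin h) ℝ)
    (hpm : ∀ i j, H i j = 1 ∨ H i j = -1)
    (hH : H * H.transpose = (h : ℝ) • 1) :
    ∃ (r : Fin n → Fin h) (c : Fin n → Fin h),
      Function.Injective r ∧ Function.Injective c ∧
      (2 : ℝ) ^ (h - n - 1) * (h : ℝ) ^ ((h : ℝ) / 2 - ((h - n : ℕ) : ℝ)) ≤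
        |(H.submatrix r c).det| := by
  classical
  set d : ℕ := h - n with hddef
  have hd : 0 < d := Nat.sub_pos_of_lt hnh
  have hnd : n + d = h := Nat.add_sub_cancel' hnh.le
  have hh0 : (0:ℝ) < (h:ℝ) := by
    have : 0 < h := lt_trans hn hnh
    exact_mod_cast this
  have hdet2 : H.det ^ 2 = (h:ℝ) ^ h := by
    have h1 := congrArg Matrix.det hH
    rw [Matrix.det_mul, Matrix.det_transpose, Matrix.det_smul, Matrix.det_one,
      Fintype.card_fin, mul_one] at h1
    rw [sq]; exact h1
  have hdetH0 : H.det ≠ 0 := by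
    intro h0
    rw [h0] at hdet2
    have := pow_pos hh0 h
    simp at hdet2
    exact absurd hdet2.symm this.ne'
  have hHTunit : IsUnit Hᵀ := by
    rw [Matrix.isUnit_iff_isUnit_det, Matrix.det_transpose]
    exact isUnit_iff_ne_zero.mpr hdetH0
  obtain ⟨g, g', hginj, hg'inj, hBunit⟩ := aux_exists_submatrix (Nat.sub_le h n) Hᵀ hHTunit
  obtain ⟨ec, hec⟩ := aux_extend_equiv hnd g hginj
  obtain ⟨er, her⟩ := aux_extend_equiv hnd g' hg'inj
  set B₀ : Matrix (Fin d) (Fin d) ℝ := Hᵀ.submatrix g g' with hB₀def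
  set N : Matrix (Fin h) (Fin h) ℝ := (h:ℝ)⁻¹ • Hᵀ with hNdef
  have hHN : H * N = 1 := by
    rw [hNdef, Matrix.mul_smul, hH, smul_smul, inv_mul_cancel₀ hh0.ne', one_smul]
  set H' : Matrix (Fin n ⊕ Fin d) (Fin n ⊕ Fin d) ℝ := H.submatrix ⇑er ⇑ec with hH'def
  set N' : Matrix (Fin n ⊕ Fin d) (Fin n ⊕ Fin d) ℝ := N.submatrix ⇑ec ⇑er with hN'def
  have hH'N' : H' * N' = 1 := by
    rw [hH'def, hN'def, Matrix.submatrix_mul_equiv, hHN, Matrix.submatrix_one_equiv]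
  set A := H'.toBlocks₁₁ with hA
  set Bb := H'.toBlocks₁₂ with hBb
  set C := H'.toBlocks₂₁ with hC
  set D := H'.toBlocks₂₂ with hD
  set B' := N'.toBlocks₁₂ with hB'
  set D' := N'.toBlocks₂₂ with hD'
  have heq1 : fromBlocks A Bb C D * fromBlocks (N'.toBlocks₁₁) B' (N'.toBlocks₂₁) D' = 1 := by
    rw [hA, hBb, hC, hD, hB', hD', fromBlocks_toBlocks, fromBlocks_toBlocks]
    exact hH'N'
  rw [fromBlocks_multiply, ← fromBlocks_one] at heq1
  have h12 : A * B' + Bb * D' = 0 := by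
    have := congrArg Matrix.toBlocks₁₂ heq1
    simpa [Matrix.toBlocks_fromBlocks₁₂,
      show (Matrix.toBlocks₁₂ (1 : Matrix (Fin n ⊕ Fin d) (Fin n ⊕ Fin d) ℝ)) = 0 from by
        rw [← fromBlocks_one, Matrix.toBlocks_fromBlocks₁₂]] using this
  have h22 : C * B' + D * D' = 1 := by
    have := congrArg Matrix.toBlocks₂₂ heq1
    simpa [Matrix.toBlocks_fromBlocks₂₂,
      show (Matrix.toBlocks₂₂ (1 : Matrix (Fin n ⊕ Fin d) (Fin n ⊕ Fin d) ℝ)) = 1 from by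
        rw [← fromBlocks_one, Matrix.toBlocks_fromBlocks₂₂]] using this
  have hX : fromBlocks A Bb C D * fromBlocks 1 B' 0 D' = fromBlocks A 0 C 1 := by
    rw [fromBlocks_multiply, h12, h22]
    simp
  have hdetA : A.det = H'.det * D'.det := by
    have h1 := congrArg Matrix.det hX
    rw [Matrix.det_mul, Matrix.det_fromBlocks_zero₂₁, Matrix.det_fromBlocks_zero₁₂] at h1
    simp only [Matrix.det_one, one_mul, mul_one] at h1
    rw [← h1, hA, hBb, hC, hD, fromBlocks_toBlocks]
  -- identify D'
  have hD'B₀ : D' = (h:ℝ)⁻¹ • B₀ := by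
    ext a b
    show N (ec (Sum.inr a)) (er (Sum.inr b)) = ((h:ℝ)⁻¹ • B₀) a b
    rw [hec, her]
    simp [hNdef, hB₀def]
  have hDdet : D'.det = ((h:ℝ)^d)⁻¹ * B₀.det := by
    rw [hD'B₀, Matrix.det_smul, Fintype.card_fin, inv_pow]
  -- |det H'|
  have hH'2 : H'.det ^ 2 = (h:ℝ) ^ h := by
    have hmul : H' * H'ᵀ = (h:ℝ) • 1 := by
      rw [hH'def, Matrix.transpose_submatrix, Matrix.submatrix_mul_equiv, hH]
      ext i j
      simp [Matrix.submatrix_apply, Matrix.smul_apply, Matrix.one_apply,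
        EmbeddingLike.apply_eq_iff_eq]
    have h1 := congrArg Matrix.det hmul
    rw [Matrix.det_mul, Matrix.det_transpose, Matrix.det_smul, Matrix.det_one,
      Fintype.card_sum, Fintype.card_fin, Fintype.card_fin, mul_one, hnd] at h1
    rw [sq]; exact h1
  have habsH' : |H'.det| = (h:ℝ) ^ ((h:ℝ)/2) := by
    have h1 : |H'.det| = Real.sqrt ((h:ℝ)^h) := by rw [← hH'2, Real.sqrt_sq_eq_abs]
    rw [h1, Real.sqrt_eq_rpow, ← Real.rpow_natCast (h:ℝ) h, ← Real.rpow_mul hh0.le]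
    congr 1
    ring
  -- B₀ bound
  have hB₀det0 : B₀.det ≠ 0 := (Matrix.isUnit_iff_isUnit_det B₀ |>.mp hBunit).ne_zero
  have hB₀lb : (2:ℝ) ^ (d - 1) ≤ |B₀.det| := by
    refine aux_pm_det_lb hd B₀ (fun a b => ?_) hB₀det0
    simpa [hB₀def] using hpm (g' b) (g a)
  refine ⟨⇑er ∘ Sum.inl, ⇑ec ∘ Sum.inl, er.injective.comp Sum.inl_injective,
    ec.injective.comp Sum.inl_injective, ?_⟩
  have hMA : H.submatrix (⇑er ∘ Sum.inl) (⇑ec ∘ Sum.inl) = A := by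
    ext i j
    rfl
  rw [hMA, hdetA, abs_mul, habsH', hDdet, abs_mul, abs_inv, abs_pow,
    abs_of_pos hh0, Real.rpow_sub hh0, Real.rpow_natCast]
  calc (2:ℝ) ^ (d-1) * ((h:ℝ) ^ ((h:ℝ)/2) / (h:ℝ)^d)
      ≤ |B₀.det| * ((h:ℝ) ^ ((h:ℝ)/2) / (h:ℝ)^d) := by
        refine mul_le_mul_of_nonneg_right hB₀lb ?_
        positivity
    _ = (h:ℝ) ^ ((h:ℝ)/2) * (((h:ℝ)^d)⁻¹ * |B₀.det|) := by ring
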